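/- Let q be a prime power and n ≥ 2. Let a_m denote the number of ordered pairs of coprime monic polynomials over F_q, each of degree m with nonzero constant term. Then a_n = a_{n−1} + (q−1)^3 · q^{2n−3}. -/
import Mathlib

open Polynomial in
/-- `coprimePairs K m` is the number `a_m` of ordered pairs of coprime monic polynomials
over `K` of degree `m` with nonzero constant term. -/
noncomputable def coprimePairs (K : Type*) [Field K] (m : ℕ) : ℕ :=
  {p : Polynomial K × Polynomial K |
    p.1.Monic ∧ p.1.natDegree = m ∧ p.1.coeff 0 ≠ 0 ∧
    p.2.Monic ∧ p.2.natDegree = m ∧ p.2.coeff 0 ≠ 0 ∧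
    IsCoprime p.1 p.2}.ncard

namespace Stmt6Aux

open Polynomial Finset

variable (K : Type*) [Field K] [Fintype K]

def Mset (k : ℕ) : Set (Polynomial K) :=
  {p | p.Monic ∧ p.natDegree = k ∧ p.coeff 0 ≠ 0}

def Cset (m : ℕ) : Set (Polynomial K × Polynomial K) :=
  {p | p.1 ∈ Mset K m ∧ p.2 ∈ Mset K m ∧ IsCoprime p.1 p.2}

def Tset (m : ℕ) : Set (Polynomial K × Polynomial K) := (Mset K m) ×ˢ (Mset K m)

variable {K}

lemma Mset_finite (k : ℕ) : (Mset K k).Finite := by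
  apply Set.Finite.of_finite_image (f := fun p => fun i : Fin (k+1) => p.coeff i)
    (Set.toFinite _)
  rintro p ⟨hp, hpk, -⟩ q ⟨hq, hqk, -⟩ h
  ext n
  rcases le_or_gt n k with hn | hn
  · exact congrFun h ⟨n, Nat.lt_succ_of_le hn⟩
  · rw [Polynomial.coeff_eq_zero_of_natDegree_lt (hpk ▸ hn),
      Polynomial.coeff_eq_zero_of_natDegree_lt (hqk ▸ hn)]

lemma Tset_finite (m : ℕ) : (Tset K m).Finite := (Mset_finite m).prod (Mset_finite m)

lemma Cset_finite (m : ℕ) : (Cset K m).Finite := by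
  apply (Tset_finite m).subset
  rintro ⟨f, g⟩ ⟨h1, h2, -⟩
  exact ⟨h1, h2⟩

instance (k : ℕ) : Finite (Mset K k) := (Mset_finite k).to_subtype
instance (m : ℕ) : Finite (Cset K m) := (Cset_finite m).to_subtype
instance (m : ℕ) : Finite (Tset K m) := (Tset_finite m).to_subtype

lemma coprimePairs_eq (m : ℕ) : coprimePairs K m = Nat.card (Cset K m) := by
  unfold coprimePairs
  rw [← Nat.card_coe_set_eq]
  apply Nat.card_congr
  apply Equiv.setCongr
  ext ⟨f, g⟩
  simp only [Cset, Mset, Set.mem_setOf_eq]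
  tauto

lemma sum_coeff_lemma {k : ℕ} (c : Fin (k+1) → K) (i : Fin (k+1)) :
    (∑ j : Fin (k+1), C (c j) * X ^ (j : ℕ)).coeff (i : ℕ) = c i := by
  rw [Polynomial.finset_sum_coeff, Finset.sum_eq_single i]
  · simp
  · intro j _ hji
    rw [coeff_C_mul, coeff_X_pow, if_neg, mul_zero]
    exact fun h => hji (Fin.ext h.symm)
  · simp

lemma degree_sum_lt {k : ℕ} (c : Fin (k+1) → K) :
    (∑ j : Fin (k+1), C (c j) * X ^ (j : ℕ)).degree < ((k+1 : ℕ) : WithBot ℕ) := by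
  apply lt_of_le_of_lt (Polynomial.degree_sum_le _ _)
  rw [Finset.sup_lt_iff (by exact WithBot.bot_lt_coe _)]
  intro j _
  apply lt_of_le_of_lt (degree_C_mul_X_pow_le _ _)
  exact_mod_cast j.is_lt

noncomputable def msetEquiv (k : ℕ) :
    (Mset K (k+1)) ≃ {c : Fin (k+1) → K // c 0 ≠ 0} where
  toFun p := ⟨fun i => (p : Polynomial K).coeff i, by
    have := p.2.2.2
    simpa using this⟩
  invFun c := ⟨X ^ (k+1) + ∑ j : Fin (k+1), C (c.1 j) * X ^ (j : ℕ), by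
    have hdeg := degree_sum_lt c.1
    have hmon : (X ^ (k+1) + ∑ j : Fin (k+1), C (c.1 j) * X ^ (j : ℕ)).Monic :=
      Polynomial.monic_X_pow_add hdeg
    have hdeg2 : (X ^ (k+1) + ∑ j : Fin (k+1), C (c.1 j) * X ^ (j : ℕ)).degree
        = ((k+1 : ℕ) : WithBot ℕ) := by
      rw [degree_add_eq_left_of_degree_lt (by rwa [degree_X_pow]), degree_X_pow]
    have hnd : (X ^ (k+1) + ∑ j : Fin (k+1), C (c.1 j) * X ^ (j : ℕ)).natDegree = k + 1 :=
      natDegree_eq_of_degree_eq_some hdeg2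
    refine ⟨hmon, hnd, ?_⟩
    have h0 := sum_coeff_lemma c.1 0
    simp only [Fin.val_zero] at h0
    rw [Polynomial.coeff_add, Polynomial.coeff_X_pow, if_neg (by omega), zero_add, h0]
    exact c.2⟩
  left_inv := by
    rintro ⟨p, hmon, hnd, h0⟩
    apply Subtype.ext
    simp only
    conv_rhs => rw [hmon.as_sum]
    rw [hnd]
    congr 1
    rw [← Fin.sum_univ_eq_sum_range (fun i => C (p.coeff i) * X ^ i) (k+1)]
  right_inv := by
    rintro ⟨c, hc⟩
    apply Subtype.ext
    funext i
    simp only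
    rw [Polynomial.coeff_add, Polynomial.coeff_X_pow, if_neg (by omega), zero_add,
      sum_coeff_lemma]

lemma card_ne_zero_subtype : Nat.card {x : K // x ≠ 0} = Fintype.card K - 1 := by
  classical
  rw [Nat.card_congr (Equiv.symm (unitsEquivNeZero (G₀ := K))), Nat.card_eq_fintype_card,
    Fintype.card_units]

noncomputable def coeffSplit (k : ℕ) :
    {c : Fin (k+1) → K // c 0 ≠ 0} ≃ {x : K // x ≠ 0} × (Fin k → K) where
  toFun c := (⟨c.1 0, c.2⟩, fun i => c.1 i.succ)
  invFun x := ⟨Fin.cons x.1.1 x.2, by simp [x.1.2]⟩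
  left_inv := by
    rintro ⟨c, hc⟩
    apply Subtype.ext
    exact Fin.cons_self_tail c
  right_inv := by
    rintro ⟨x, t⟩
    ext i <;> simp

lemma card_Mset_succ (k : ℕ) :
    Nat.card (Mset K (k+1)) = (Fintype.card K - 1) * Fintype.card K ^ k := by
  rw [Nat.card_congr ((msetEquiv k).trans (coeffSplit k)), Nat.card_prod,
    card_ne_zero_subtype]
  congr 1
  rw [Nat.card_eq_fintype_card]
  simp

lemma card_Mset_zero : Nat.card (Mset K 0) = 1 := by
  have h : (Mset K 0) = {1} := by
    ext p
    constructor
    · rintro ⟨hm, hd, -⟩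
      exact hm.natDegree_eq_zero.mp hd
    · rintro rfl
      exact ⟨monic_one, natDegree_one, by simp⟩
  rw [h]
  simp

lemma nat_card_sigma {ι : Type*} [Fintype ι] (β : ι → Type*) [∀ i, Finite (β i)] :
    Nat.card (Σ i, β i) = ∑ i, Nat.card (β i) := by
  letI := fun i => Fintype.ofFinite (β i)
  simp [Nat.card_eq_fintype_card]

/-- The decomposition map: (d, (f, g)) ↦ (d*f, d*g). -/
noncomputable def phi (m : ℕ)
    (x : Σ k : Fin (m+1), (Mset K (k : ℕ)) × (Cset K (m - (k : ℕ)))) : Tset K m :=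
  ⟨(x.2.1.1 * x.2.2.1.1, x.2.1.1 * x.2.2.1.2), by
    obtain ⟨k, d, fg⟩ := x
    have hk : (k : ℕ) ≤ m := Nat.lt_succ_iff.mp k.is_lt
    obtain ⟨hdm, hdd, hd0⟩ := d.2
    obtain ⟨⟨hfm, hfd, hf0⟩, ⟨hgm, hgd, hg0⟩, -⟩ := fg.2
    constructor
    · refine ⟨hdm.mul hfm, ?_, ?_⟩
      · rw [Polynomial.natDegree_mul hdm.ne_zero hfm.ne_zero, hdd, hfd]; omega
      · rw [Polynomial.mul_coeff_zero]; exact mul_ne_zero hd0 hf0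
    · refine ⟨hdm.mul hgm, ?_, ?_⟩
      · rw [Polynomial.natDegree_mul hdm.ne_zero hgm.ne_zero, hdd, hgd]; omega
      · rw [Polynomial.mul_coeff_zero]; exact mul_ne_zero hd0 hg0⟩

lemma phi_injective (m : ℕ) : Function.Injective (phi (K := K) m) := by
  rintro ⟨k1, d1, fg1⟩ ⟨k2, d2, fg2⟩ h
  have h' : (d1.1 * fg1.1.1, d1.1 * fg1.1.2) = (d2.1 * fg2.1.1, d2.1 * fg2.1.2) :=
    congrArg Subtype.val h
  rw [Prod.mk.injEq] at h'
  obtain ⟨hf, hg⟩ := h'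
  obtain ⟨hd1m, hd1d, -⟩ := d1.2
  obtain ⟨hd2m, hd2d, -⟩ := d2.2
  obtain ⟨-, -, hcop1⟩ := fg1.2
  obtain ⟨-, -, hcop2⟩ := fg2.2
  have hdvd12 : d1.1 ∣ d2.1 := by
    obtain ⟨a, b, hab⟩ := hcop2
    refine ⟨a * fg1.1.1 + b * fg1.1.2, ?_⟩
    calc d2.1 = (a * fg2.1.1 + b * fg2.1.2) * d2.1 := by rw [hab, one_mul]
    _ = a * (d2.1 * fg2.1.1) + b * (d2.1 * fg2.1.2) := by ring
    _ = a * (d1.1 * fg1.1.1) + b * (d1.1 * fg1.1.2) := by rw [hf, hg]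
    _ = d1.1 * (a * fg1.1.1 + b * fg1.1.2) := by ring
  have hdvd21 : d2.1 ∣ d1.1 := by
    obtain ⟨a, b, hab⟩ := hcop1
    refine ⟨a * fg2.1.1 + b * fg2.1.2, ?_⟩
    calc d1.1 = (a * fg1.1.1 + b * fg1.1.2) * d1.1 := by rw [hab, one_mul]
    _ = a * (d1.1 * fg1.1.1) + b * (d1.1 * fg1.1.2) := by ring
    _ = a * (d2.1 * fg2.1.1) + b * (d2.1 * fg2.1.2) := by rw [← hf, ← hg]
    _ = d2.1 * (a * fg2.1.1 + b * fg2.1.2) := by ring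
  have hd12 : d1.1 = d2.1 :=
    Polynomial.eq_of_monic_of_associated hd1m hd2m (associated_of_dvd_dvd hdvd12 hdvd21)
  have hk : k1 = k2 := by
    apply Fin.ext
    rw [← hd1d, ← hd2d, hd12]
  subst hk
  have hd : d1 = d2 := Subtype.ext hd12
  subst hd
  have hff : fg1.1.1 = fg2.1.1 := mul_left_cancel₀ hd1m.ne_zero hf
  have hgg : fg1.1.2 = fg2.1.2 := mul_left_cancel₀ hd1m.ne_zero hg
  have : fg1 = fg2 := Subtype.ext (Prod.ext hff hgg)
  rw [this]

lemma phi_surjective (m : ℕ) : Function.Surjective (phi (K := K) m) := by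
  rintro ⟨⟨f, g⟩, ⟨hfm, hfd, hf0⟩, ⟨hgm, hgd, hg0⟩⟩
  classical
  set d := GCDMonoid.gcd f g with hd_def
  have hd0 : d ≠ 0 := fun h => hfm.ne_zero (((gcd_eq_zero_iff f g).mp h).1)
  have hdm : d.Monic := by
    have := Polynomial.monic_normalize (p := d) hd0
    rwa [hd_def, _root_.normalize_gcd] at this
  have hdf : d ∣ f := gcd_dvd_left f g
  have hdg : d ∣ g := gcd_dvd_right f g
  have hfe : d * (f / d) = f := EuclideanDomain.mul_div_cancel' hd0 hdf
  have hge : d * (g / d) = g := EuclideanDomain.mul_div_cancel' hd0 hdg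
  have hf'0 : f / d ≠ 0 := fun h => hfm.ne_zero (by rw [← hfe, h, mul_zero])
  have hg'0 : g / d ≠ 0 := fun h => hgm.ne_zero (by rw [← hge, h, mul_zero])
  have hf'm : (f / d).Monic := by
    have : (d * (f / d)).leadingCoeff = 1 := by rw [hfe]; exact hfm
    rwa [Polynomial.leadingCoeff_mul, hdm.leadingCoeff, one_mul] at this
  have hg'm : (g / d).Monic := by
    have : (d * (g / d)).leadingCoeff = 1 := by rw [hge]; exact hgm
    rwa [Polynomial.leadingCoeff_mul, hdm.leadingCoeff, one_mul] at this
  have hdk : d.natDegree ≤ m := hfd ▸ Polynomial.natDegree_le_of_dvd hdf hfm.ne_zero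
  have hfdeg : (f / d).natDegree = m - d.natDegree := by
    have := Polynomial.natDegree_mul hd0 hf'0
    rw [hfe, hfd] at this
    omega
  have hgdeg : (g / d).natDegree = m - d.natDegree := by
    have := Polynomial.natDegree_mul hd0 hg'0
    rw [hge, hgd] at this
    omega
  have hdc0 : d.coeff 0 ≠ 0 := by
    intro h
    apply hf0
    rw [← hfe, Polynomial.mul_coeff_zero, h, zero_mul]
  have hf'c0 : (f / d).coeff 0 ≠ 0 := by
    intro h
    apply hf0
    rw [← hfe, Polynomial.mul_coeff_zero, h, mul_zero]
  have hg'c0 : (g / d).coeff 0 ≠ 0 := by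
    intro h
    apply hg0
    rw [← hge, Polynomial.mul_coeff_zero, h, mul_zero]
  have hcop : IsCoprime (f / d) (g / d) := isCoprime_div_gcd_div_gcd hgm.ne_zero
  refine ⟨⟨⟨d.natDegree, Nat.lt_succ_of_le hdk⟩,
    ⟨d, hdm, rfl, hdc0⟩,
    ⟨(f / d, g / d), ⟨hf'm, hfdeg, hf'c0⟩, ⟨hg'm, hgdeg, hg'c0⟩, hcop⟩⟩, ?_⟩
  apply Subtype.ext
  show (d * (f / d), d * (g / d)) = (f, g)
  rw [hfe, hge]

lemma card_Tset_sum (m : ℕ) :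
    Nat.card (Tset K m) =
      ∑ k ∈ range (m+1), Nat.card (Mset K k) * Nat.card (Cset K (m - k)) := by
  rw [← Nat.card_eq_of_bijective (phi (K := K) m) ⟨phi_injective m, phi_surjective m⟩,
    nat_card_sigma]
  rw [← Fin.sum_univ_eq_sum_range (fun k => Nat.card (Mset K k) * Nat.card (Cset K (m - k))) (m+1)]
  congr 1
  funext k
  rw [Nat.card_prod]

lemma card_Tset (m : ℕ) : Nat.card (Tset K m) = Nat.card (Mset K m) ^ 2 := by
  unfold Tset
  rw [Nat.card_congr (Equiv.Set.prod (Mset K m) (Mset K m)), Nat.card_prod, sq]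

end Stmt6Aux

open Stmt6Aux Finset in
/-- For `n ≥ 2`, `a_n = a_(n-1) + (q-1)^3 · q^(2n-3)`. -/
theorem stmt_6 (K : Type*) [Field K] [Fintype K] (q n : ℕ) (hq : q = Fintype.card K)
    (hn : 2 ≤ n) :
    coprimePairs K n = coprimePairs K (n - 1) + (q - 1) ^ 3 * q ^ (2 * n - 3) := by
  have hq2 : 2 ≤ q := hq ▸ Fintype.one_lt_card
  set a : ℕ → ℕ := fun m => coprimePairs K m with ha
  -- the fundamental counting identity
  have key : ∀ t : ℕ, a (t+1) + (q - 1) * (∑ j ∈ range (t+1), q ^ j * a (t - j))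
      = (q - 1) ^ 2 * q ^ (2 * t) := by
    intro t
    have h1 := card_Tset_sum (K := K) (t+1)
    rw [card_Tset, card_Mset_succ] at h1
    have h2 : ∀ j, Nat.card (Cset K j) = a j := fun j => (coprimePairs_eq j).symm
    rw [Finset.sum_range_succ' _ (t+1)] at h1
    simp only [card_Mset_succ, card_Mset_zero, Nat.sub_zero, one_mul, Nat.add_sub_cancel_left,
      Nat.succ_sub_succ_eq_sub, h2] at h1
    rw [← hq] at h1
    have hfac : ∑ k ∈ range (t+1), (q - 1) * q ^ k * a (t - k)
        = (q - 1) * ∑ j ∈ range (t+1), q ^ j * a (t - j) := by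
      rw [Finset.mul_sum]
      apply Finset.sum_congr rfl
      intro k _
      ring
    rw [hfac] at h1
    rw [add_comm, ← h1]
    ring
  obtain ⟨t, rfl⟩ : ∃ t, n = t + 2 := ⟨n - 2, by omega⟩
  have e1 := key (t + 1)
  have e2 := key t
  have hP : ∑ j ∈ range (t+2), q ^ j * a (t + 1 - j)
      = a (t+1) + q * ∑ j ∈ range (t+1), q ^ j * a (t - j) := by
    rw [Finset.sum_range_succ' (fun j => q ^ j * a (t + 1 - j)) (t+1)]
    simp only [pow_zero, one_mul, Nat.add_sub_cancel_left, Nat.succ_sub_succ_eq_sub]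
    rw [add_comm]
    congr 1
    rw [Finset.mul_sum]
    congr 1
    funext j
    ring
  rw [hP] at e1
  -- now pure arithmetic
  have hsub : t + 2 - 1 = t + 1 := by omega
  have hexp : 2 * (t + 2) - 3 = 2 * t + 1 := by omega
  rw [hsub, hexp]
  obtain ⟨s, rfl⟩ : ∃ s, q = s + 2 := ⟨q - 2, by omega⟩
  have hqm1 : s + 2 - 1 = s + 1 := by omega
  rw [hqm1] at e1 e2 ⊢
  set A := a (t + 2)
  set B := a (t + 1)
  set P := ∑ j ∈ range (t+1), (s+2) ^ j * a (t - j)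
  set X := (s + 2) ^ (2 * t) with hX
  have hX1 : (s + 2) ^ (2 * (t + 1)) = X * (s+2)^2 := by
    rw [hX, ← pow_add]
    ring_nf
  have hX2 : (s + 2) ^ (2 * t + 1) = X * (s+2) := by
    rw [hX, ← pow_succ]
  rw [hX1] at e1
  rw [hX2]
  -- e1 : A + (s+1) * (B + (s+2) * P) = (s+1)^2 * (X * (s+2)^2)
  -- e2 : B + (s+1) * P = (s+1)^2 * X
  -- goal : A = B + (s+1)^3 * (X * (s+2))
  zify at e1 e2 ⊢
  linear_combination e1 - (s + 2 : ℤ) * e2
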